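/- arXiv:2012.03185 — 3 statements merged into one kernel-verified Lean document; each statement's English description precedes it below -/
import Mathlib

section
/- Every connected cograph G on n vertices admits a spanning tree of depth two rooted at some vertex ρ such that every vertex at depth one has at most one child. -/
open SimpleGraph

attribute [local instance] Classical.propDecidable

def IsCograph {V : Type*} (G : SimpleGraph V) : Prop :=
  IsEmpty (SimpleGraph.pathGraph 4 ↪g G)

def AreTwins {V : Type*} (G : SimpleGraph V) (u v : V) : Prop :=
  u ≠ v ∧ (G.neighborSet u = G.neighborSet v ∨
    insert u (G.neighborSet u) = insert v (G.neighborSet v))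

def DistHereditary {V : Type*} (G : SimpleGraph V) : Prop :=
  ∀ s : Set V, (G.induce s).Connected →
    ∀ u v : s, (G.induce s).dist u v = G.dist u v

/-- Build a `pathGraph 4` embedding from an explicit induced path. -/
lemma p4emb {V : Type*} (G : SimpleGraph V) (v0 v1 v2 v3 : V)
    (h01 : G.Adj v0 v1) (h12 : G.Adj v1 v2) (h23 : G.Adj v2 v3)
    (n02 : ¬ G.Adj v0 v2) (n03 : ¬ G.Adj v0 v3) (n13 : ¬ G.Adj v1 v3)
    (d02 : v0 ≠ v2) (d03 : v0 ≠ v3) (d13 : v1 ≠ v3) :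
    Nonempty (SimpleGraph.pathGraph 4 ↪g G) := by
  have n02' : ¬ G.Adj v2 v0 := fun h => n02 h.symm
  have n03' : ¬ G.Adj v3 v0 := fun h => n03 h.symm
  have n13' : ¬ G.Adj v3 v1 := fun h => n13 h.symm
  refine ⟨⟨⟨![v0, v1, v2, v3], ?_⟩, ?_⟩⟩
  · intro a b hab
    fin_cases a <;> fin_cases b <;>
      simp_all [h01.ne, h12.ne, h23.ne, h01.ne', h12.ne', h23.ne', d02.symm, d03.symm, d13.symm]
  · intro a b
    show G.Adj (![v0, v1, v2, v3] a) (![v0, v1, v2, v3] b) ↔ _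
    fin_cases a <;> fin_cases b <;>
      simp [pathGraph_adj, h01, h12, h23, h01.symm, h12.symm, h23.symm,
        n02, n03, n13, n02', n03', n13', G.irrefl] <;> decide

lemma cograph_of_ne {V : Type*} {G : SimpleGraph V} (hco : IsCograph G) (v0 v1 v2 v3 : V)
    (h01 : G.Adj v0 v1) (h12 : G.Adj v1 v2) (h23 : G.Adj v2 v3)
    (n02 : ¬ G.Adj v0 v2) (n03 : ¬ G.Adj v0 v3) (n13 : ¬ G.Adj v1 v3)
    (d02 : v0 ≠ v2) (d03 : v0 ≠ v3) (d13 : v1 ≠ v3) : False :=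
  (p4emb G v0 v1 v2 v3 h01 h12 h23 n02 n03 n13 d02 d03 d13).elim hco.false

lemma cograph_compl {V : Type*} {G : SimpleGraph V} (hco : IsCograph G) : IsCograph Gᶜ := by
  constructor
  intro e
  have adj : ∀ i j : Fin 4, (pathGraph 4).Adj i j → Gᶜ.Adj (e i) (e j) := fun i j h =>
    e.map_rel_iff.mpr h
  have nadj : ∀ i j : Fin 4, i ≠ j → ¬ (pathGraph 4).Adj i j → G.Adj (e i) (e j) := by
    intro i j hij h
    have h2 : ¬ Gᶜ.Adj (e i) (e j) := fun hh => h (e.map_rel_iff.mp hh)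
    rw [G.compl_adj] at h2
    push_neg at h2
    exact h2 (fun hv => hij (e.injective hv))
  have a01 : (pathGraph 4).Adj 0 1 := by rw [pathGraph_adj]; decide
  have a12 : (pathGraph 4).Adj 1 2 := by rw [pathGraph_adj]; decide
  have a23 : (pathGraph 4).Adj 2 3 := by rw [pathGraph_adj]; decide
  have n02 : ¬ (pathGraph 4).Adj 0 2 := by rw [pathGraph_adj]; decide
  have n03 : ¬ (pathGraph 4).Adj 0 3 := by rw [pathGraph_adj]; decide
  have n13 : ¬ (pathGraph 4).Adj 1 3 := by rw [pathGraph_adj]; decide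
  have c01 := (G.compl_adj _ _).mp (adj 0 1 a01)
  have c12 := (G.compl_adj _ _).mp (adj 1 2 a12)
  have c23 := (G.compl_adj _ _).mp (adj 2 3 a23)
  -- induced P4 in G : e 1 - e 3 - e 0 - e 2
  exact cograph_of_ne hco (e 1) (e 3) (e 0) (e 2)
    (nadj 1 3 (by decide) n13) ((nadj 0 3 (by decide) n03).symm) (nadj 0 2 (by decide) n02)
    (fun h => c01.2 h.symm) c12.2 (fun h => c23.2 h.symm)
    (fun h => (by decide : (1:Fin 4) ≠ 0) (e.injective h))
    (fun h => (by decide : (1:Fin 4) ≠ 2) (e.injective h))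
    (fun h => (by decide : (3:Fin 4) ≠ 2) (e.injective h))

def CutOrJoin {V : Type*} (G : SimpleGraph V) : Prop :=
  (∃ A : Set V, A.Nonempty ∧ Aᶜ.Nonempty ∧ ∀ a ∈ A, ∀ b ∈ Aᶜ, ¬ G.Adj a b) ∨
  (∃ A : Set V, A.Nonempty ∧ Aᶜ.Nonempty ∧ ∀ a ∈ A, ∀ b ∈ Aᶜ, G.Adj a b)

lemma cutOrJoin_of_compl {V : Type*} {G : SimpleGraph V} (h : CutOrJoin Gᶜ) : CutOrJoin G := by
  rcases h with ⟨A, hA, hAc, hcut⟩ | ⟨A, hA, hAc, hjoin⟩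
  · right
    refine ⟨A, hA, hAc, fun a ha b hb => ?_⟩
    have hne : a ≠ b := fun h => hb (h ▸ ha)
    have := hcut a ha b hb
    rw [G.compl_adj] at this
    push_neg at this
    exact this hne
  · left
    refine ⟨A, hA, hAc, fun a ha b hb => ?_⟩
    exact ((G.compl_adj _ _).mp (hjoin a ha b hb)).2

lemma lemA {V : Type*} {G : SimpleGraph V} (hco : IsCograph G) (x : V) (S T : Set V)
    (hS : S.Nonempty) (hT : T.Nonempty) (hxS : x ∉ S) (hxT : x ∉ T)
    (hdisj : ∀ v, v ∈ S → v ∉ T) (hcover : ∀ v, v ≠ x → v ∈ S ∨ v ∈ T)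
    (hjoin : ∀ s ∈ S, ∀ t ∈ T, G.Adj s t) : CutOrJoin G := by
  by_cases hTadj : ∀ t ∈ T, G.Adj x t
  · right
    refine ⟨T, hT, ⟨x, hxT⟩, fun a ha b hb => ?_⟩
    rcases eq_or_ne b x with rfl | hbx
    · exact (hTadj a ha).symm
    · rcases hcover b hbx with hbS | hbT
      · exact (hjoin b hbS a ha).symm
      · exact absurd hbT hb
  by_cases hSadj : ∀ s ∈ S, G.Adj x s
  · right
    refine ⟨S, hS, ⟨x, hxS⟩, fun a ha b hb => ?_⟩
    rcases eq_or_ne b x with rfl | hbx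
    · exact (hSadj a ha).symm
    · rcases hcover b hbx with hbS | hbT
      · exact absurd hbS hb
      · exact hjoin a ha b hbT
  push_neg at hTadj hSadj
  obtain ⟨b2, hb2T, hb2⟩ := hTadj
  obtain ⟨b1, hb1S, hb1⟩ := hSadj
  -- key claim: every neighbor of x is adjacent to every non-neighbor of x
  have key : ∀ a, G.Adj x a → ∀ b, b ≠ x → ¬ G.Adj x b → G.Adj a b := by
    intro a ha b hbx hb
    rcases hcover b hbx with hbS | hbT
    · rcases hcover a ha.ne' with haS | haT
      · by_contra hab
        have hab2 : a ≠ b2 := fun h => hdisj a haS (h ▸ hb2T)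
        have habb : b ≠ b2 := fun h => hdisj b hbS (h ▸ hb2T)
        exact cograph_of_ne hco x a b2 b ha (hjoin a haS b2 hb2T) ((hjoin b hbS b2 hb2T).symm)
          hb2 hb hab (fun h => hxT (h ▸ hb2T)) (fun h => hxS (h ▸ hbS))
          (fun h => hb (h ▸ ha))
      · exact (hjoin b hbS a haT).symm
    · rcases hcover a ha.ne' with haS | haT
      · exact hjoin a haS b hbT
      · by_contra hab
        have habb : b ≠ b1 := fun h => hdisj b1 hb1S (h ▸ hbT)
        exact cograph_of_ne hco x a b1 b ha ((hjoin b1 hb1S a haT).symm) (hjoin b1 hb1S b hbT)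
          hb1 hb hab (fun h => hxS (h ▸ hb1S)) (fun h => hxT (h ▸ hbT))
          (fun h => hb (h ▸ ha))
  by_cases hN : ∃ a, G.Adj x a
  · obtain ⟨a0, ha0⟩ := hN
    right
    refine ⟨{a | G.Adj x a}, ⟨a0, ha0⟩, ⟨x, fun h => G.irrefl h⟩, fun a ha b hb => ?_⟩
    rcases eq_or_ne b x with hbx | hbx
    · have hxa : G.Adj x a := ha
      exact hbx.symm ▸ hxa.symm
    · exact key a ha b hbx hb
  · push_neg at hN
    left
    refine ⟨{x}, ⟨x, rfl⟩, ⟨b1, fun h => hxS (h ▸ hb1S)⟩, fun a ha b hb => ?_⟩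
    rw [Set.mem_singleton_iff] at ha
    subst ha
    exact hN b

lemma cograph_comap {V W : Type*} (f : V ↪ W) {G : SimpleGraph W} (hco : IsCograph G) :
    IsCograph (G.comap f) :=
  ⟨fun e => hco.false ((SimpleGraph.Embedding.comap f G).comp e)⟩

lemma cutOrJoin_aux : ∀ (n : ℕ) {V : Type*} [Fintype V] (G : SimpleGraph V),
    Fintype.card V = n → IsCograph G → 2 ≤ n → CutOrJoin G := by
  intro n
  induction n using Nat.strong_induction_on with
  | _ n ih =>
    intro V _ G hcard hco h2
    rcases eq_or_lt_of_le h2 with h2' | h3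
    · -- card V = 2
      rw [← h2'] at hcard
      have hc2 : (Finset.univ : Finset V).card = 2 := hcard
      obtain ⟨x, y, hxy, huniv⟩ := Finset.card_eq_two.mp hc2
      have hall : ∀ z : V, z = x ∨ z = y := by
        intro z
        have := Finset.mem_univ z
        rw [huniv] at this
        simpa using this
      by_cases hadj : G.Adj x y
      · right
        refine ⟨{x}, ⟨x, rfl⟩, ⟨y, fun h => hxy (Set.mem_singleton_iff.mp h).symm⟩,
          fun a ha b hb => ?_⟩
        rw [Set.mem_singleton_iff] at ha
        subst ha
        rcases hall b with rfl | rfl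
        · exact absurd rfl hb
        · exact hadj
      · left
        refine ⟨{x}, ⟨x, rfl⟩, ⟨y, fun h => hxy (Set.mem_singleton_iff.mp h).symm⟩,
          fun a ha b hb => ?_⟩
        rw [Set.mem_singleton_iff] at ha
        subst ha
        rcases hall b with rfl | rfl
        · exact G.irrefl
        · exact hadj
    · -- card V ≥ 3
      have hne : Nonempty V := Fintype.card_pos_iff.mp (by omega)
      obtain ⟨x⟩ := hne
      set V' := {y : V // y ≠ x} with hV'
      have hcard' : Fintype.card V' = n - 1 := by
        rw [← hcard]
        have : Fintype.card V' = Fintype.card {y : V // ¬ y = x} := Fintype.card_congr (Equiv.refl _)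
        rw [this, Fintype.card_subtype_compl, Fintype.card_subtype_eq]
      set f : V' ↪ V := Function.Embedding.subtype _ with hf
      have hco' : IsCograph (G.comap f) := cograph_comap f hco
      have := ih (n-1) (by omega) (G.comap f) hcard' hco' (by omega)
      rcases this with ⟨A, hA, hAc, hcut⟩ | ⟨A, hA, hAc, hjoin⟩
      · -- cut in G' : apply lemA to Gᶜ
        apply cutOrJoin_of_compl
        refine lemA (cograph_compl hco) x (Subtype.val '' A) (Subtype.val '' Aᶜ)
          (hA.image _) (hAc.image _) ?_ ?_ ?_ ?_ ?_
        · rintro ⟨⟨v, hv⟩, -, hvx⟩; exact hv hvx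
        · rintro ⟨⟨v, hv⟩, -, hvx⟩; exact hv hvx
        · rintro v ⟨⟨a, ha⟩, haA, rfl⟩ ⟨⟨b, hb⟩, hbA, hba⟩
          have : (⟨a, ha⟩ : V') = ⟨b, hb⟩ := Subtype.ext hba.symm
          exact hbA (this ▸ haA)
        · intro v hvx
          rcases Classical.em ((⟨v, hvx⟩ : V') ∈ A) with h | h
          · exact Or.inl ⟨⟨v, hvx⟩, h, rfl⟩
          · exact Or.inr ⟨⟨v, hvx⟩, h, rfl⟩
        · rintro s ⟨⟨a, ha⟩, haA, rfl⟩ t ⟨⟨b, hb⟩, hbA, rfl⟩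
          rw [compl_adj]
          refine ⟨fun h => hbA (Subtype.ext h.symm ▸ haA), hcut _ haA _ hbA⟩
      · -- join in G' : apply lemA to G
        refine lemA hco x (Subtype.val '' A) (Subtype.val '' Aᶜ)
          (hA.image _) (hAc.image _) ?_ ?_ ?_ ?_ ?_
        · rintro ⟨⟨v, hv⟩, -, hvx⟩; exact hv hvx
        · rintro ⟨⟨v, hv⟩, -, hvx⟩; exact hv hvx
        · rintro v ⟨⟨a, ha⟩, haA, rfl⟩ ⟨⟨b, hb⟩, hbA, hba⟩
          have : (⟨a, ha⟩ : V') = ⟨b, hb⟩ := Subtype.ext hba.symm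
          exact hbA (this ▸ haA)
        · intro v hvx
          rcases Classical.em ((⟨v, hvx⟩ : V') ∈ A) with h | h
          · exact Or.inl ⟨⟨v, hvx⟩, h, rfl⟩
          · exact Or.inr ⟨⟨v, hvx⟩, h, rfl⟩
        · rintro s ⟨⟨a, ha⟩, haA, rfl⟩ t ⟨⟨b, hb⟩, hbA, rfl⟩
          exact hjoin _ haA _ hbA

lemma reach_stay {V : Type*} {G : SimpleGraph V} {A : Set V}
    (hcut : ∀ a ∈ A, ∀ b ∈ Aᶜ, ¬ G.Adj a b) :
    ∀ {a b : V}, (w : G.Walk a b) → a ∈ A → b ∈ A := by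
  intro a b w
  induction w with
  | nil => exact id
  | cons h p ih =>
    intro ha
    apply ih
    by_contra hc
    exact hcut _ ha _ hc h

lemma build {V : Type*} [Fintype V] (G : SimpleGraph V) (A : Set V)
    (hA : A.Nonempty) (hAc : Aᶜ.Nonempty)
    (hjoin : ∀ a ∈ A, ∀ b ∈ Aᶜ, G.Adj a b)
    (hcard : Nat.card A ≤ Nat.card (Aᶜ : Set V)) :
    ∃ (ρ : V) (parent : V → V),
      parent ρ = ρ ∧
      (∀ v, v ≠ ρ → G.Adj v (parent v)) ∧
      (∀ v, v ≠ ρ → parent (parent v) = ρ) ∧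
      (∀ u v, parent u = parent v → parent u ≠ ρ → u = v) := by
  obtain ⟨ρ, hρ⟩ := hA
  have hss : (A \ {ρ} : Set V) ⊂ A := by
    constructor
    · exact Set.diff_subset
    · intro hsub
      exact (hsub hρ).2 rfl
  have hlt : Nat.card (A \ {ρ} : Set V) < Nat.card A :=
    Set.Finite.card_lt_card (Set.toFinite A) hss
  obtain ⟨f⟩ : Nonempty ((A \ {ρ} : Set V) ↪ (Aᶜ : Set V)) :=
    Function.Embedding.nonempty_of_card_le
      (by simpa [Nat.card_eq_fintype_card] using le_trans hlt.le hcard)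
  classical
  refine ⟨ρ, fun v => if h : v ∈ A ∧ v ≠ ρ then (f ⟨v, h.1, h.2⟩ : V) else ρ, ?_, ?_, ?_, ?_⟩
  · simp
  · intro v hv
    by_cases h : v ∈ A ∧ v ≠ ρ
    · simp only [dif_pos h]
      exact hjoin v h.1 _ (f ⟨v, h.1, h.2⟩).2
    · simp only [dif_neg h]
      have hvA : v ∉ A := by
        intro hvA; exact h ⟨hvA, hv⟩
      exact (hjoin ρ hρ v hvA).symm
  · intro v hv
    by_cases h : v ∈ A ∧ v ≠ ρ
    · simp only [dif_pos h]
      have hmem : (f ⟨v, h.1, h.2⟩ : V) ∈ (Aᶜ : Set V) := (f ⟨v, h.1, h.2⟩).2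
      have : ¬ ((f ⟨v, h.1, h.2⟩ : V) ∈ A ∧ (f ⟨v, h.1, h.2⟩ : V) ≠ ρ) := by
        intro hc; exact hmem hc.1
      simp only [dif_neg this]
    · simp only [dif_neg h]
      simp
  · intro u v huv hne
    by_cases hu : u ∈ A ∧ u ≠ ρ
    · by_cases hv : v ∈ A ∧ v ≠ ρ
      · simp only [dif_pos hu, dif_pos hv] at huv
        have : f ⟨u, hu.1, hu.2⟩ = f ⟨v, hv.1, hv.2⟩ := Subtype.ext huv
        have h2 := f.injective this
        exact congrArg Subtype.val h2
      · simp only [dif_pos hu, dif_neg hv] at huv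
        exfalso
        have hm := (f ⟨u, hu.1, hu.2⟩).2
        rw [huv] at hm
        exact hm hρ
    · exfalso
      apply hne
      simp only [dif_neg hu]

theorem stmt1 {V : Type*} [Fintype V] [Nonempty V] (G : SimpleGraph V)
    (hconn : G.Connected) (hco : IsCograph G) :
    ∃ (ρ : V) (parent : V → V),
      parent ρ = ρ ∧
      (∀ v, v ≠ ρ → G.Adj v (parent v)) ∧
      (∀ v, v ≠ ρ → parent (parent v) = ρ) ∧
      (∀ u v, parent u = parent v → parent u ≠ ρ → u = v) := by
  rcases le_or_gt (Fintype.card V) 1 with h1 | h2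
  · -- singleton
    haveI : Subsingleton V := Fintype.card_le_one_iff_subsingleton.mp h1
    obtain ⟨ρ⟩ := (inferInstance : Nonempty V)
    exact ⟨ρ, fun _ => ρ, rfl, fun v hv => absurd (Subsingleton.elim v ρ) hv,
      fun v hv => absurd (Subsingleton.elim v ρ) hv, fun u v _ _ => Subsingleton.elim u v⟩
  · have hcj := cutOrJoin_aux (Fintype.card V) G rfl hco h2
    rcases hcj with ⟨A, hA, hAc, hcut⟩ | ⟨A, hA, hAc, hjoin⟩
    · exfalso
      obtain ⟨a, ha⟩ := hA
      obtain ⟨b, hb⟩ := hAc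
      obtain ⟨w⟩ := hconn.preconnected a b
      exact hb (reach_stay hcut w ha)
    · rcases le_or_gt (Nat.card A) (Nat.card (Aᶜ : Set V)) with hle | hlt
      · exact build G A hA hAc hjoin hle
      · have e : (Aᶜᶜ : Set V) = A := compl_compl A
        refine build G Aᶜ hAc ?_ ?_ ?_
        · rw [e]; exact hA
        · intro a ha b hb
          exact (hjoin b (e ▸ hb) a ha).symm
        · have hcc : Nat.card (Aᶜᶜ : Set V) = Nat.card A := by rw [e]
          rw [hcc]
          exact le_of_lt hlt
end

section
/- A graph G on vertices v_1, ..., v_n is a cograph if and only if it admits a twin ordering, i.e., an ordering of its vertices such that for every j ≥ 2, the vertex v_j has a twin in the subgraph induced by {v_1, ..., v_j}. -/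
open SimpleGraph

section Aux

attribute [local instance] Classical.propDecidable

set_option linter.unusedTactic false
set_option linter.unreachableTactic false

universe u

variable {V : Type u} {W : Type*}

lemma p4_no_twins : ∀ i i' : Fin 4, i ≠ i' →
    ∃ k : Fin 4, k ≠ i ∧ k ≠ i' ∧ ¬((pathGraph 4).Adj i k ↔ (pathGraph 4).Adj i' k) := by
  simp only [pathGraph_adj]
  decide

/-- From an explicit induced path on 4 vertices, the graph is not a cograph. -/
lemma not_isCograph_of_path {G : SimpleGraph V} {a b c d : V}
    (hab : G.Adj a b) (hbc : G.Adj b c) (hcd : G.Adj c d)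
    (hac : ¬ G.Adj a c) (had : ¬ G.Adj a d) (hbd : ¬ G.Adj b d) :
    ¬ IsCograph G := by
  intro hG
  have hac' : a ≠ c := by rintro rfl; exact had hcd
  have had' : a ≠ d := by rintro rfl; exact hac hcd.symm
  have hbd' : b ≠ d := by rintro rfl; exact had hab
  have hca : ¬ G.Adj c a := fun h => hac h.symm
  have hda : ¬ G.Adj d a := fun h => had h.symm
  have hdb : ¬ G.Adj d b := fun h => hbd h.symm
  have v0 : ((0 : Fin 4) : ℕ) = 0 := rfl
  have v1 : ((1 : Fin 4) : ℕ) = 1 := rfl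
  have v2 : ((2 : Fin 4) : ℕ) = 2 := rfl
  have v3 : ((3 : Fin 4) : ℕ) = 3 := rfl
  refine hG.false ⟨⟨![a, b, c, d], ?_⟩, ?_⟩
  · intro i j hij
    fin_cases i <;> fin_cases j <;> simp_all
  · intro i j
    show G.Adj (![a, b, c, d] i) (![a, b, c, d] j) ↔ _
    fin_cases i <;> fin_cases j <;>
      simp [pathGraph_adj, v0, v1, v2, v3, hab, hbc, hcd, hac, had, hbd,
        hab.symm, hbc.symm, hcd.symm, hca, hda, hdb, G.irrefl]

lemma isCograph_of_subsingleton (G : SimpleGraph W) [Subsingleton W] : IsCograph G := by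
  constructor
  intro f
  have : (0 : Fin 4) = 1 := f.injective (Subsingleton.elim _ _)
  simp at this

lemma isCograph_induce {G : SimpleGraph V} (h : IsCograph G) (s : Set V) :
    IsCograph (G.induce s) := by
  constructor
  intro f
  exact h.false ((Embedding.induce s).comp f)

lemma isCograph_of_iso {V' : Type*} {G : SimpleGraph V} {G' : SimpleGraph V'} (φ : G ≃g G')
    (h : IsCograph G) : IsCograph G' := by
  constructor
  intro f
  exact h.false (φ.symm.toEmbedding.comp f)

/-- Nested induced subgraphs. -/
noncomputable def induceInduceIso (G : SimpleGraph V) (t : Set V) (s : Set t) :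
    (G.induce t).induce s ≃g G.induce (Subtype.val '' s) where
  toEquiv := Equiv.Set.image Subtype.val s Subtype.val_injective
  map_rel_iff' := by
    intro a b
    simp only [Equiv.Set.image, Equiv.Set.imageOfInjOn]
    exact Iff.rfl

lemma areTwins_map {V' : Type*} {G : SimpleGraph V} {G' : SimpleGraph V'} (φ : G ≃g G') {u v : V}
    (h : AreTwins G u v) : AreTwins G' (φ u) (φ v) := by
  obtain ⟨hne, h⟩ := h
  have himg : ∀ x : V, G'.neighborSet (φ x) = φ '' G.neighborSet x := by
    intro x
    ext y
    constructor
    · intro hy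
      refine ⟨φ.symm y, ?_, by simp⟩
      have : G'.Adj (φ x) (φ (φ.symm y)) := by simpa using hy
      exact φ.map_rel_iff.mp this
    · rintro ⟨z, hz, rfl⟩
      exact φ.map_rel_iff.mpr hz
  refine ⟨fun he => hne (φ.injective he), ?_⟩
  rcases h with h | h
  · left; rw [himg, himg, h]
  · right
    rw [himg, himg, ← Set.image_insert_eq, ← Set.image_insert_eq, h]

lemma areTwins_shift {G : SimpleGraph V} {s : Set V} {a b c : ↥s}
    (h : AreTwins (G.induce s) a b) (hval : b.1 = c.1) : AreTwins (G.induce s) a c := by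
  have hbc : b = c := Subtype.ext hval
  exact hbc ▸ h

lemma areTwins_congr {G : SimpleGraph V} {s t : Set V} (h : s = t) {u v : s}
    (htw : AreTwins (G.induce s) u v) :
    AreTwins (G.induce t) ⟨u.1, h ▸ u.2⟩ ⟨v.1, h ▸ v.2⟩ := by
  subst h; exact htw

lemma isCograph_induce_congr {G : SimpleGraph V} {s t : Set V} (h : s = t)
    (hc : IsCograph (G.induce s)) : IsCograph (G.induce t) := by
  subst h; exact hc

lemma twin_adj_iff {H : SimpleGraph W} {u v : W} (htw : AreTwins H u v) {w : W}
    (hwu : w ≠ u) (hwv : w ≠ v) : H.Adj u w ↔ H.Adj v w := by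
  obtain ⟨hne, h⟩ := htw
  rcases h with h | h
  · rw [← mem_neighborSet, ← mem_neighborSet, h]
  · have h1 : w ∈ insert u (H.neighborSet u) ↔ w ∈ insert v (H.neighborSet v) := by rw [h]
    simpa [Set.mem_insert_iff, hwu, hwv, mem_neighborSet] using h1

lemma exists_break {G : SimpleGraph V} {v u w : V} (p : G.Walk u w) :
    (G.Adj v u ∨ u = v) → w ≠ v → ¬ G.Adj v w →
    ∃ x y, G.Adj v x ∧ G.Adj x y ∧ ¬ G.Adj v y ∧ y ≠ v := by
  induction p with
  | nil =>
    intro h hw hnadj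
    rcases h with h | h
    · exact absurd h hnadj
    · exact absurd h hw
  | @cons a b w hadj q ih =>
    intro h hw hnadj
    by_cases hb : G.Adj v b
    · exact ih (Or.inl hb) hw hnadj
    · by_cases hbv : b = v
      · exact ih (Or.inr hbv) hw hnadj
      · rcases h with h | h
        · exact ⟨a, b, h, hadj, hb, hbv⟩
        · subst h
          exact absurd hadj hb

lemma exists_gate {G : SimpleGraph V} {v : V} {a b : V} (p : G.Walk a b) (hb : b ≠ v) :
    (∀ _ : a = v, ∃ z, ∃ hz : z ≠ v, G.Adj v z ∧
        (G.induce {x | x ≠ v}).Reachable ⟨z, hz⟩ ⟨b, hb⟩) ∧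
    (∀ ha : a ≠ v, (G.induce {x | x ≠ v}).Reachable ⟨a, ha⟩ ⟨b, hb⟩ ∨
        ∃ z, ∃ hz : z ≠ v, G.Adj v z ∧
          (G.induce {x | x ≠ v}).Reachable ⟨z, hz⟩ ⟨b, hb⟩) := by
  induction p with
  | nil =>
    constructor
    · intro ha; exact absurd ha hb
    · intro ha; exact Or.inl (Reachable.refl _)
  | @cons a c b hadj q ih =>
    constructor
    · intro ha
      have hadj' : G.Adj v c := ha ▸ hadj
      have hc : c ≠ v := fun h => G.irrefl (h ▸ hadj')
      rcases (ih hb).2 hc with hr | ⟨z, hz, hvz, hr⟩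
      · exact ⟨c, hc, hadj', hr⟩
      · exact ⟨z, hz, hvz, hr⟩
    · intro ha
      by_cases hc : c = v
      · exact Or.inr ((ih hb).1 hc)
      · rcases (ih hb).2 hc with hr | ⟨z, hz, hvz, hr⟩
        · left
          have hedge : (G.induce {x | x ≠ v}).Adj ⟨a, ha⟩ ⟨c, hc⟩ := hadj
          exact hedge.reachable.trans hr
        · exact Or.inr ⟨z, hz, hvz, hr⟩

/-- Extending a join decomposition of `G - v` to one of `G`. -/
lemma join_extend {G : SimpleGraph V} {v : V} {A B : Set V}
    (hcog : IsCograph G)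
    (hAv : v ∉ A) (hBv : v ∉ B)
    (hAB : ∀ a ∈ A, ∀ b ∈ B, G.Adj a b)
    (hcover : ∀ w, w ≠ v → w ∈ A ∨ w ∈ B)
    (hdisj : ∀ w, w ∈ A → w ∉ B)
    (hBne : B.Nonempty)
    {x : V} (hxA : x ∈ A) (hvx : G.Adj v x) :
    ∃ S : Set V, S.Nonempty ∧ Sᶜ.Nonempty ∧ ∀ a ∈ S, ∀ b ∈ Sᶜ, G.Adj a b := by
  have hxv : x ≠ v := fun h => G.irrefl (h ▸ hvx)
  by_cases hA0 : ∃ a ∈ A, ¬ G.Adj v a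
  · by_cases hB0 : ∃ b ∈ B, ¬ G.Adj v b
    · obtain ⟨a, haA, hva⟩ := hA0
      obtain ⟨b, hbB, hvb⟩ := hB0
      have claim1 : ∀ a0 ∈ A, ¬G.Adj v a0 → ∀ a1 ∈ A, G.Adj v a1 → G.Adj a0 a1 := by
        intro a0 h0 hn a1 h1 hy
        by_contra hna
        exact not_isCograph_of_path (hAB a0 h0 b hbB) ((hAB a1 h1 b hbB).symm) hy.symm
          hna (fun h => hn h.symm) (fun h => hvb h.symm) hcog
      have claim2 : ∀ b0 ∈ B, ¬G.Adj v b0 → ∀ b1 ∈ B, G.Adj v b1 → G.Adj b0 b1 := by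
        intro b0 h0 hn b1 h1 hy
        by_contra hnb
        exact not_isCograph_of_path ((hAB a haA b0 h0).symm) (hAB a haA b1 h1) hy.symm
          hnb (fun h => hn h.symm) (fun h => hva h.symm) hcog
      refine ⟨{w | (w ∈ A ∨ w ∈ B) ∧ G.Adj v w}, ⟨x, Or.inl hxA, hvx⟩, ⟨v, ?_⟩, ?_⟩
      · intro hv
        exact G.irrefl hv.2
      · rintro s ⟨hsAB, hvs⟩ c hc
        by_cases hcv : c = v
        · exact hcv ▸ hvs.symm
        · have hcAB := hcover c hcv
          have hvc : ¬ G.Adj v c := fun h => hc ⟨hcAB, h⟩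
          rcases hsAB with hsA | hsB <;> rcases hcAB with hcA | hcB
          · exact (claim1 c hcA hvc s hsA hvs).symm
          · exact hAB s hsA c hcB
          · exact (hAB c hcA s hsB).symm
          · exact (claim2 c hcB hvc s hsB hvs).symm
    · push_neg at hB0
      obtain ⟨b, hbB⟩ := hBne
      refine ⟨insert v A, ⟨v, Set.mem_insert _ _⟩, ⟨b, ?_⟩, ?_⟩
      · intro hb
        rcases hb with h | h
        · exact hBv (h ▸ hbB)
        · exact hdisj b h hbB
      · rintro s hs c hc
        have hcv : c ≠ v := fun h => hc (h ▸ Set.mem_insert _ _)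
        have hcA : c ∉ A := fun h => hc (Set.mem_insert_of_mem _ h)
        have hcB : c ∈ B := (hcover c hcv).resolve_left hcA
        rcases hs with h | h
        · exact h ▸ (hB0 c hcB)
        · exact hAB s h c hcB
  · push_neg at hA0
    refine ⟨insert v B, ⟨v, Set.mem_insert _ _⟩, ⟨x, ?_⟩, ?_⟩
    · intro hx
      rcases hx with h | h
      · exact hxv h
      · exact hdisj x hxA h
    · rintro s hs c hc
      have hcv : c ≠ v := fun h => hc (h ▸ Set.mem_insert _ _)
      have hcB : c ∉ B := fun h => hc (Set.mem_insert_of_mem _ h)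
      have hcA : c ∈ A := (hcover c hcv).resolve_right hcB
      rcases hs with h | h
      · exact h ▸ (hA0 c hcA)
      · exact (hAB c hcA s h).symm

/-- Seinsche's theorem: a connected cograph on at least two vertices is a join. -/
lemma seinsche : ∀ (n : ℕ) {V : Type u} [Fintype V] (G : SimpleGraph V),
    Fintype.card V = n → IsCograph G → G.Connected → 2 ≤ Fintype.card V →
    ∃ S : Set V, S.Nonempty ∧ Sᶜ.Nonempty ∧ ∀ a ∈ S, ∀ b ∈ Sᶜ, G.Adj a b := by
  intro n
  induction n using Nat.strong_induction_on with
  | _ n ih =>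
    intro V _ G hcard hcog hconn h2
    obtain ⟨v⟩ : Nonempty V := Fintype.card_pos_iff.mp (by omega)
    by_cases hall : ∀ b, b ≠ v → G.Adj v b
    · refine ⟨{v}, ⟨v, rfl⟩, ?_, ?_⟩
      · obtain ⟨w, hw⟩ := Fintype.exists_ne_of_one_lt_card (by omega) v
        exact ⟨w, hw⟩
      · rintro a ha b hb
        have ha' : a = v := ha
        have hb' : b ≠ v := hb
        subst ha'
        exact hall b hb'
    · push_neg at hall
      obtain ⟨w, hwv, hvw⟩ := hall
      obtain ⟨x, y, hvx, hxy, hvy, hyv⟩ :=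
        exists_break ((hconn.preconnected v w).some) (Or.inr rfl) hwv hvw
      have hxv : x ≠ v := fun h => G.irrefl (h ▸ hvx)
      by_cases hHc : (G.induce {z | z ≠ v}).Connected
      · -- `G - v` is connected; use the induction hypothesis on it.
        have hcards : Fintype.card {z : V // z ≠ v} < n := by
          rw [← hcard]
          refine Fintype.card_lt_of_injective_of_notMem (b := v) Subtype.val
            Subtype.val_injective ?_
          rintro ⟨⟨z, hz⟩, hzz⟩
          exact hz hzz
        have h2s : 2 ≤ Fintype.card {z : V // z ≠ v} := by
          have hxy' : (⟨x, hxv⟩ : {z : V // z ≠ v}) ≠ ⟨y, hyv⟩ := by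
            intro h
            apply G.irrefl
            have hxy2 : x = y := congrArg Subtype.val h
            exact hxy2 ▸ hxy
          exact Fintype.one_lt_card_iff_nontrivial.mpr ⟨⟨_, _, hxy'⟩⟩
        obtain ⟨S', hS'ne, hS'cne, hS'adj⟩ :=
          ih _ hcards (G.induce {z | z ≠ v}) rfl (isCograph_induce hcog _) hHc h2s
        have hAB : ∀ a ∈ Subtype.val '' S', ∀ b ∈ Subtype.val '' S'ᶜ, G.Adj a b := by
          rintro a ⟨p, hp, rfl⟩ b ⟨q, hq, rfl⟩
          exact hS'adj p hp q hq
        have hAv : v ∉ Subtype.val '' S' := by rintro ⟨p, _, hp⟩; exact p.2 hp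
        have hBv : v ∉ Subtype.val '' S'ᶜ := by rintro ⟨p, _, hp⟩; exact p.2 hp
        have hcover : ∀ z : V, z ≠ v →
            z ∈ Subtype.val '' S' ∨ z ∈ Subtype.val '' S'ᶜ := by
          intro z hz
          by_cases h : (⟨z, hz⟩ : {z : V // z ≠ v}) ∈ S'
          · exact Or.inl ⟨_, h, rfl⟩
          · exact Or.inr ⟨_, h, rfl⟩
        have hdisj : ∀ z, z ∈ Subtype.val '' S' → z ∉ Subtype.val '' S'ᶜ := by
          rintro z ⟨p, hp, rfl⟩ ⟨q, hq, hqz⟩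
          rw [Subtype.val_injective hqz] at hq
          exact hq hp
        have hAne : (Subtype.val '' S').Nonempty := hS'ne.image _
        have hBne : (Subtype.val '' S'ᶜ).Nonempty := hS'cne.image _
        rcases hcover x hxv with hxm | hxm
        · exact join_extend hcog hAv hBv hAB hcover hdisj hBne hxm hvx
        · refine join_extend hcog hBv hAv
            (fun b hb a ha => (hAB a ha b hb).symm)
            (fun z hz => (hcover z hz).symm)
            (fun z hz hz' => hdisj z hz' hz) hAne hxm hvx
      · -- `G - v` is disconnected: derive an induced path, contradiction.
        exfalso
        haveI : Nonempty ↑({z : V | z ≠ v}) := ⟨⟨x, hxv⟩⟩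
        have hpre : ¬ (G.induce {z | z ≠ v}).Preconnected := by
          intro h
          exact hHc ⟨h⟩
        rw [Preconnected] at hpre
        push_neg at hpre
        obtain ⟨p, q, hpq⟩ := hpre
        have hux : ∃ t : {z : V // z ≠ v},
            ¬ (G.induce {z | z ≠ v}).Reachable ⟨x, hxv⟩ t := by
          by_contra hcon'
          push_neg at hcon'
          exact hpq ((hcon' p).symm.trans (hcon' q))
        obtain ⟨⟨t, htv⟩, hxt⟩ := hux
        obtain ⟨z, hz, hvz, hr⟩ :=
          ((exists_gate ((hconn.preconnected x t).some) htv).2 hxv).resolve_left hxt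
        have hedge : ∀ (a b : V) (ha : a ≠ v) (hb : b ≠ v), G.Adj a b →
            (G.induce {z | z ≠ v}).Reachable ⟨a, ha⟩ ⟨b, hb⟩ := by
          intro a b ha hb h
          have hedge' : (G.induce {z | z ≠ v}).Adj ⟨a, ha⟩ ⟨b, hb⟩ := h
          exact hedge'.reachable
        have hxz : ¬ G.Adj x z := by
          intro h
          exact hxt ((hedge x z hxv hz h).trans hr)
        have hyz : ¬ G.Adj y z := by
          intro h
          exact hxt (((hedge x y hxv hyv hxy).trans (hedge y z hyv hz h)).trans hr)
        exact not_isCograph_of_path hxy.symm hvx.symm hvz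
          (fun h => hvy h.symm) hyz hxz hcog

lemma areTwins_lift_closed {G : SimpleGraph V} {C : Set V}
    (hcl : ∀ u ∈ C, ∀ w, G.Adj u w → w ∈ C) {u' v' : C}
    (h : AreTwins (G.induce C) u' v') : AreTwins G u'.1 v'.1 := by
  have himg : ∀ p : C, G.neighborSet p.1 = Subtype.val '' (G.induce C).neighborSet p := by
    intro p
    ext w
    constructor
    · intro hw
      have hwC : w ∈ C := hcl p.1 p.2 w hw
      exact ⟨⟨w, hwC⟩, hw, rfl⟩
    · rintro ⟨z, hz, rfl⟩
      exact hz
  obtain ⟨hne, h⟩ := h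
  refine ⟨fun he => hne (Subtype.val_injective he), ?_⟩
  rcases h with h | h
  · left; rw [himg, himg, h]
  · right; rw [himg, himg, ← Set.image_insert_eq, ← Set.image_insert_eq, h]

lemma areTwins_lift_join {G : SimpleGraph V} {S : Set V}
    (hSadj : ∀ a ∈ S, ∀ b ∈ Sᶜ, G.Adj a b) {u' v' : S}
    (h : AreTwins (G.induce S) u' v') : AreTwins G u'.1 v'.1 := by
  have himg : ∀ p : S,
      G.neighborSet p.1 = Subtype.val '' (G.induce S).neighborSet p ∪ Sᶜ := by
    intro p
    ext w
    constructor
    · intro hw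
      by_cases hwS : w ∈ S
      · exact Or.inl ⟨⟨w, hwS⟩, hw, rfl⟩
      · exact Or.inr hwS
    · rintro (⟨z, hz, rfl⟩ | hw)
      · exact hz
      · exact hSadj p.1 p.2 w hw
  obtain ⟨hne, h⟩ := h
  refine ⟨fun he => hne (Subtype.val_injective he), ?_⟩
  rcases h with h | h
  · left; rw [himg, himg, h]
  · right
    rw [himg, himg, ← Set.insert_union, ← Set.insert_union,
      ← Set.image_insert_eq, ← Set.image_insert_eq, h]

/-- Every cograph on at least two vertices has a pair of twins. -/
lemma exists_twins : ∀ (n : ℕ) {V : Type u} [Fintype V] (G : SimpleGraph V),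
    Fintype.card V = n → IsCograph G → 2 ≤ Fintype.card V →
    ∃ u v, AreTwins G u v := by
  intro n
  induction n using Nat.strong_induction_on with
  | _ n ih =>
    intro V _ G hcard hcog h2
    by_cases hconn : G.Connected
    · obtain ⟨S, hSne, hScne, hSadj⟩ := seinsche n G hcard hcog hconn h2
      by_cases hnt : S.Nontrivial
      · have hlt : Fintype.card S < n := by
          rw [← hcard]
          obtain ⟨b, hb⟩ := hScne
          refine Fintype.card_lt_of_injective_of_notMem (b := b) Subtype.val
            Subtype.val_injective ?_
          rintro ⟨p, hp⟩
          exact hb (hp ▸ p.2)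
        have h2S : 2 ≤ Fintype.card S :=
          Fintype.one_lt_card_iff_nontrivial.mpr (Set.nontrivial_coe_sort.mpr hnt)
        obtain ⟨u', v', htw⟩ := ih _ hlt (G.induce S) rfl (isCograph_induce hcog S) h2S
        exact ⟨u'.1, v'.1, areTwins_lift_join hSadj htw⟩
      · by_cases hnt' : Sᶜ.Nontrivial
        · have hadj' : ∀ a ∈ Sᶜ, ∀ b ∈ Sᶜᶜ, G.Adj a b := by
            intro a ha b hb
            rw [compl_compl] at hb
            exact (hSadj b hb a ha).symm
          have hlt : Fintype.card ↥(Sᶜ) < n := by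
            rw [← hcard]
            obtain ⟨a, ha⟩ := hSne
            refine Fintype.card_lt_of_injective_of_notMem (b := a) Subtype.val
              Subtype.val_injective ?_
            rintro ⟨p, hp⟩
            exact (hp ▸ p.2) ha
          have h2S : 2 ≤ Fintype.card ↥(Sᶜ) :=
            Fintype.one_lt_card_iff_nontrivial.mpr (Set.nontrivial_coe_sort.mpr hnt')
          obtain ⟨u', v', htw⟩ :=
            ih _ hlt (G.induce Sᶜ) rfl (isCograph_induce hcog Sᶜ) h2S
          exact ⟨u'.1, v'.1, areTwins_lift_join hadj' htw⟩
        · obtain ⟨a, ha⟩ := hSne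
          obtain ⟨b, hb⟩ := hScne
          have hS1 : S.Subsingleton := Set.not_nontrivial_iff.mp hnt
          have hS2 : Sᶜ.Subsingleton := Set.not_nontrivial_iff.mp hnt'
          have hab : G.Adj a b := hSadj a ha b hb
          have hNa : G.neighborSet a = {b} := by
            ext w
            simp only [mem_neighborSet, Set.mem_singleton_iff]
            constructor
            · intro hw
              by_cases hwS : w ∈ S
              · exact absurd (hS1 hwS ha) hw.ne'
              · exact hS2 hwS hb
            · rintro rfl; exact hab
          have hNb : G.neighborSet b = {a} := by
            ext w
            simp only [mem_neighborSet, Set.mem_singleton_iff]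
            constructor
            · intro hw
              by_cases hwS : w ∈ S
              · exact hS1 hwS ha
              · exact absurd (hS2 hwS hb) hw.ne'
            · rintro rfl; exact hab.symm
          exact ⟨a, b, hab.ne, Or.inr (by rw [hNa, hNb, Set.pair_comm])⟩
    · haveI : Nonempty V := Fintype.card_pos_iff.mp (by omega)
      have hpre : ¬ G.Preconnected := fun h => hconn ⟨h⟩
      rw [Preconnected] at hpre
      push_neg at hpre
      obtain ⟨p, q, hpq⟩ := hpre
      have hcl : ∀ u ∈ {z | G.Reachable p z}, ∀ w, G.Adj u w → w ∈ {z | G.Reachable p z} :=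
        fun u hu w hw => hu.trans hw.reachable
      have hcl' : ∀ u ∈ {z | G.Reachable q z}, ∀ w, G.Adj u w → w ∈ {z | G.Reachable q z} :=
        fun u hu w hw => hu.trans hw.reachable
      by_cases hnt : ({z | G.Reachable p z} : Set V).Nontrivial
      · have hlt : Fintype.card ({z | G.Reachable p z} : Set V) < n := by
          rw [← hcard]
          refine Fintype.card_lt_of_injective_of_notMem (b := q) Subtype.val
            Subtype.val_injective ?_
          rintro ⟨r, hr⟩
          exact hpq (hr ▸ r.2)
        have h2S : 2 ≤ Fintype.card ({z | G.Reachable p z} : Set V) :=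
          Fintype.one_lt_card_iff_nontrivial.mpr (Set.nontrivial_coe_sort.mpr hnt)
        obtain ⟨u', v', htw⟩ := ih _ hlt (G.induce _) rfl (isCograph_induce hcog _) h2S
        exact ⟨u'.1, v'.1, areTwins_lift_closed hcl htw⟩
      · by_cases hnt' : ({z | G.Reachable q z} : Set V).Nontrivial
        · have hlt : Fintype.card ({z | G.Reachable q z} : Set V) < n := by
            rw [← hcard]
            refine Fintype.card_lt_of_injective_of_notMem (b := p) Subtype.val
              Subtype.val_injective ?_
            rintro ⟨r, hr⟩
            exact hpq (hr ▸ r.2).symm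
          have h2S : 2 ≤ Fintype.card ({z | G.Reachable q z} : Set V) :=
            Fintype.one_lt_card_iff_nontrivial.mpr (Set.nontrivial_coe_sort.mpr hnt')
          obtain ⟨u', v', htw⟩ := ih _ hlt (G.induce _) rfl (isCograph_induce hcog _) h2S
          exact ⟨u'.1, v'.1, areTwins_lift_closed hcl' htw⟩
        · have hS1 : ({z | G.Reachable p z} : Set V).Subsingleton :=
            Set.not_nontrivial_iff.mp hnt
          have hS2 : ({z | G.Reachable q z} : Set V).Subsingleton :=
            Set.not_nontrivial_iff.mp hnt'
          have hNp : G.neighborSet p = ∅ := by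
            ext w
            simp only [mem_neighborSet, Set.mem_empty_iff_false, iff_false]
            intro hw
            exact G.irrefl ((hS1 hw.reachable (Reachable.refl p)) ▸ hw)
          have hNq : G.neighborSet q = ∅ := by
            ext w
            simp only [mem_neighborSet, Set.mem_empty_iff_false, iff_false]
            intro hw
            exact G.irrefl ((hS2 hw.reachable (Reachable.refl q)) ▸ hw)
          exact ⟨p, q, fun h => hpq (h ▸ Reachable.refl p), Or.inl (by rw [hNp, hNq])⟩

/-- If `v` has a twin and `G - v` is a cograph then so is `G`. -/
lemma isCograph_of_twin {H : SimpleGraph W} {u v : W}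
    (htw : AreTwins H u v) (hc : IsCograph (H.induce {x | x ≠ v})) : IsCograph H := by
  by_contra hH
  rw [IsCograph, not_isEmpty_iff] at hH
  obtain ⟨f⟩ := hH
  have havoid : ∀ (g : pathGraph 4 ↪g H), (∀ k, g k ≠ v) → False := by
    intro g hg
    refine hc.false ⟨⟨fun k => ⟨g k, hg k⟩, ?_⟩, ?_⟩
    · intro i j hij
      exact g.injective (congrArg Subtype.val hij)
    · intro i j
      exact g.map_rel_iff
  by_cases hv : ∃ i, f i = v
  · obtain ⟨i, hi⟩ := hv
    by_cases hu : ∃ i', f i' = u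
    · obtain ⟨i', hi'⟩ := hu
      have hne : i ≠ i' := by
        rintro rfl
        exact htw.1 (hi'.symm.trans hi)
      obtain ⟨k, hki, hki', hkiff⟩ := p4_no_twins i i' hne
      apply hkiff
      have hfku : f k ≠ u := fun h => hki' (f.injective (h.trans hi'.symm))
      have hfkv : f k ≠ v := fun h => hki (f.injective (h.trans hi.symm))
      have h1 : (pathGraph 4).Adj i k ↔ H.Adj v (f k) := by
        rw [← hi]; exact f.map_rel_iff.symm
      have h2 : (pathGraph 4).Adj i' k ↔ H.Adj u (f k) := by
        rw [← hi']; exact f.map_rel_iff.symm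
      rw [h1, h2]
      exact (twin_adj_iff htw hfku hfkv).symm
    · push_neg at hu
      have hginj : Function.Injective (fun k => if k = i then u else f k) := by
        intro a b hab
        simp only at hab
        by_cases ha : a = i <;> by_cases hb : b = i
        · rw [ha, hb]
        · rw [if_pos ha, if_neg hb] at hab; exact absurd hab.symm (hu b)
        · rw [if_neg ha, if_pos hb] at hab; exact absurd hab (hu a)
        · rw [if_neg ha, if_neg hb] at hab; exact f.injective hab
      have hmap : ∀ a b : Fin 4,
          H.Adj (if a = i then u else f a) (if b = i then u else f b) ↔
            (pathGraph 4).Adj a b := by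
        intro a b
        rcases eq_or_ne a i with ha | ha <;> rcases eq_or_ne b i with hb | hb
        · rw [if_pos ha, if_pos hb, ha, hb]
          simp [H.irrefl]
        · rw [if_pos ha, if_neg hb, ha]
          have hfb : f b ≠ v := fun h => hb (f.injective (h.trans hi.symm))
          rw [twin_adj_iff htw (hu b) hfb]
          rw [show v = f i from hi.symm]
          exact f.map_rel_iff
        · rw [if_neg ha, if_pos hb, hb]
          rw [H.adj_comm, twin_adj_iff htw (hu a) (fun h => ha (f.injective (h.trans hi.symm)))]
          rw [show v = f i from hi.symm, H.adj_comm]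
          exact f.map_rel_iff
        · rw [if_neg ha, if_neg hb]
          exact f.map_rel_iff
      have hgv : ∀ k, (if k = i then u else f k) ≠ v := by
        intro k
        rcases eq_or_ne k i with hk | hk
        · rw [if_pos hk]; exact htw.1
        · rw [if_neg hk]; exact fun h => hk (f.injective (h.trans hi.symm))
      exact havoid ⟨⟨_, hginj⟩, hmap _ _⟩ hgv
  · push_neg at hv
    exact havoid f hv

/-- A graph with a twin ordering is a cograph. -/
lemma isCograph_of_ordering {V' : Type u} [Fintype V'] (G : SimpleGraph V')
    (e : Fin (Fintype.card V') ≃ V')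
    (he : ∀ j : Fin (Fintype.card V'), 0 < (j : ℕ) →
      ∃ u : {x : V' | ∃ k, k ≤ j ∧ e k = x},
        AreTwins (G.induce {x : V' | ∃ k, k ≤ j ∧ e k = x}) u
          ⟨e j, ⟨j, le_refl j, rfl⟩⟩) :
    IsCograph G := by
  rcases Nat.eq_zero_or_pos (Fintype.card V') with h0 | hpos
  · haveI : IsEmpty V' := Fintype.card_eq_zero_iff.mp h0
    constructor
    intro f
    exact (IsEmpty.false (f 0))
  · have key : ∀ m : ℕ, ∀ hm : m < Fintype.card V',
        IsCograph (G.induce {x : V' | ∃ k, k ≤ (⟨m, hm⟩ : Fin (Fintype.card V')) ∧ e k = x}) := by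
      intro m
      induction m with
      | zero =>
        intro hm
        have hset : {x : V' | ∃ k, k ≤ (⟨0, hm⟩ : Fin (Fintype.card V')) ∧ e k = x}
            = {e ⟨0, hm⟩} := by
          ext x
          simp only [Set.mem_setOf_eq, Set.mem_singleton_iff]
          constructor
          · rintro ⟨k, hk, rfl⟩
            have hk' : (k : ℕ) ≤ 0 := hk
            have : k = ⟨0, hm⟩ := Fin.ext (show (k : ℕ) = 0 by omega)
            rw [this]
          · rintro rfl; exact ⟨_, le_refl _, rfl⟩
        rw [hset]
        haveI : Subsingleton ↥({e ⟨0, hm⟩} : Set V') := by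
          constructor
          rintro ⟨x, hx⟩ ⟨y, hy⟩
          simp only [Set.mem_singleton_iff] at hx hy
          subst hx; subst hy; rfl
        exact isCograph_of_subsingleton _
      | succ m ihm =>
        intro hm
        have hm' : m < Fintype.card V' := Nat.lt_of_succ_lt hm
        obtain ⟨u, hu⟩ := he ⟨m + 1, hm⟩ (Nat.succ_pos m)
        have hejnot : e ⟨m + 1, hm⟩ ∉
            {x : V' | ∃ k, k ≤ (⟨m, hm'⟩ : Fin (Fintype.card V')) ∧ e k = x} := by
          rintro ⟨k, hk, hkx⟩
          have hkj : k = ⟨m + 1, hm⟩ := e.injective hkx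
          have h1 : (k : ℕ) ≤ m := hk
          rw [hkj] at h1
          exact absurd h1 (Nat.not_succ_le_self m)
        have hsets : Subtype.val ''
              {x : ↥{x : V' | ∃ k, k ≤ (⟨m + 1, hm⟩ : Fin (Fintype.card V')) ∧ e k = x} |
                x ≠ ⟨e ⟨m + 1, hm⟩, ⟨⟨m + 1, hm⟩, le_refl _, rfl⟩⟩}
            = {x : V' | ∃ k, k ≤ (⟨m, hm'⟩ : Fin (Fintype.card V')) ∧ e k = x} := by
          ext x
          constructor
          · rintro ⟨⟨x, ⟨k, hk, hkx⟩⟩, hxne, rfl⟩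
            have hxv : x ≠ e ⟨m + 1, hm⟩ := fun h => hxne (Subtype.ext h)
            have hkj : k ≠ ⟨m + 1, hm⟩ := by
              rintro rfl
              exact hxv hkx.symm
            have hk1 : (k : ℕ) ≤ m + 1 := hk
            have hk2 : (k : ℕ) ≠ m + 1 := fun h => hkj (Fin.ext h)
            refine ⟨k, ?_, hkx⟩
            exact show (k : ℕ) ≤ m by omega
          · rintro ⟨k, hk, rfl⟩
            have hk1 : (k : ℕ) ≤ m := hk
            have hkj : k ≤ (⟨m + 1, hm⟩ : Fin (Fintype.card V')) :=
              show (k : ℕ) ≤ m + 1 by omega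
            refine ⟨⟨e k, ⟨k, hkj, rfl⟩⟩, ?_, rfl⟩
            intro h
            apply hejnot
            have hvk : e k = e ⟨m + 1, hm⟩ := congrArg Subtype.val h
            exact hvk ▸ ⟨k, hk, rfl⟩
        apply isCograph_of_twin hu
        refine isCograph_of_iso (induceInduceIso G _ _).symm ?_
        exact isCograph_induce_congr hsets.symm (ihm hm')
    have hm : Fintype.card V' - 1 < Fintype.card V' := by omega
    have huniv : {x : V' | ∃ k, k ≤ (⟨Fintype.card V' - 1, hm⟩ : Fin (Fintype.card V')) ∧
        e k = x} = Set.univ := by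
      ext x
      simp only [Set.mem_setOf_eq, Set.mem_univ, iff_true]
      refine ⟨e.symm x, ?_, by simp⟩
      have h1 : ((e.symm x : Fin (Fintype.card V')) : ℕ) < Fintype.card V' := (e.symm x).2
      exact show ((e.symm x : Fin (Fintype.card V')) : ℕ) ≤ Fintype.card V' - 1 by omega
    exact isCograph_of_iso (induceUnivIso G) (isCograph_induce_congr huniv (key _ hm))

/-- Every cograph admits a twin ordering. -/
lemma exists_ordering : ∀ (n : ℕ) {V : Type u} [Fintype V] (G : SimpleGraph V),
    Fintype.card V = n → IsCograph G →
    ∃ e : Fin (Fintype.card V) ≃ V,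
      ∀ j : Fin (Fintype.card V), 0 < (j : ℕ) →
        ∃ u : {x : V | ∃ k, k ≤ j ∧ e k = x},
          AreTwins (G.induce {x : V | ∃ k, k ≤ j ∧ e k = x}) u
            ⟨e j, ⟨j, le_refl j, rfl⟩⟩ := by
  intro n
  induction n using Nat.strong_induction_on with
  | _ n ih =>
    intro V _ G hcard hcog
    by_cases h2 : 2 ≤ Fintype.card V
    case neg =>
      refine ⟨(Fintype.equivFin V).symm, ?_⟩
      intro j hj
      exfalso
      have := j.2
      omega
    case pos =>
      obtain ⟨u, v, htw⟩ := exists_twins n G hcard hcog h2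
      have hcards : Fintype.card ↥({x : V | x ≠ v}) < n := by
        rw [← hcard]
        refine Fintype.card_lt_of_injective_of_notMem (b := v) Subtype.val
          Subtype.val_injective ?_
        rintro ⟨p, hp⟩
        exact p.2 hp
      set m := Fintype.card ↥({x : V | x ≠ v}) with hmdef
      obtain ⟨e', he'⟩ := ih _ hcards (G.induce {x : V | x ≠ v}) hmdef.symm
        (isCograph_induce hcog _)
      have hm1 : m + 1 = Fintype.card V := by
        have h1 : Fintype.card ↥({x : V | x ≠ v}) = Fintype.card V - 1 := by
          have h2' : Fintype.card {x : V // x = v} = 1 := Fintype.card_subtype_eq v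
          have h3 : Fintype.card {x : V // ¬ x = v} =
              Fintype.card V - Fintype.card {x : V // x = v} :=
            Fintype.card_subtype_compl _
          rw [h2'] at h3
          exact h3
        omega
      have hfinj : Function.Injective (fun i : Fin (Fintype.card V) =>
          if h : (i : ℕ) < m then (e' ⟨i, h⟩ : V) else v) := by
        intro i j hij
        simp only at hij
        by_cases hi : (i : ℕ) < m <;> by_cases hj : (j : ℕ) < m
        · rw [dif_pos hi, dif_pos hj] at hij
          have := e'.injective (Subtype.val_injective hij)
          have := congrArg Fin.val this
          exact Fin.ext this
        · rw [dif_pos hi, dif_neg hj] at hij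
          exact absurd hij (e' ⟨i, hi⟩).2
        · rw [dif_neg hi, dif_pos hj] at hij
          exact absurd hij.symm (e' ⟨j, hj⟩).2
        · have hi2 := i.2
          have hj2 := j.2
          exact Fin.ext (by omega)
      have hfsurj : Function.Surjective (fun i : Fin (Fintype.card V) =>
          if h : (i : ℕ) < m then (e' ⟨i, h⟩ : V) else v) := by
        intro x
        by_cases hx : x = v
        · refine ⟨⟨m, by omega⟩, ?_⟩
          simp only
          rw [dif_neg (lt_irrefl m)]
          exact hx.symm
        · refine ⟨⟨(e'.symm ⟨x, hx⟩ : Fin m), by have := (e'.symm ⟨x, hx⟩).2; omega⟩, ?_⟩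
          simp only
          rw [dif_pos (e'.symm ⟨x, hx⟩).2]
          have : (⟨(e'.symm ⟨x, hx⟩ : Fin m), (e'.symm ⟨x, hx⟩).2⟩ : Fin m)
              = e'.symm ⟨x, hx⟩ := Fin.ext rfl
          rw [this, Equiv.apply_symm_apply]
      refine ⟨Equiv.ofBijective _ ⟨hfinj, hfsurj⟩, ?_⟩
      intro j hj
      by_cases hjm : (j : ℕ) < m
      · obtain ⟨u', hu'⟩ := he' ⟨(j : ℕ), hjm⟩ hj
        have hsets : Subtype.val ''
              {x' : ↥({x : V | x ≠ v}) |
                ∃ k, k ≤ (⟨(j : ℕ), hjm⟩ : Fin m) ∧ e' k = x'}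
            = {x : V | ∃ k, k ≤ j ∧ (Equiv.ofBijective _ ⟨hfinj, hfsurj⟩) k = x} := by
          ext x
          constructor
          · rintro ⟨⟨x, hxv⟩, ⟨k', hk', hk'x⟩, rfl⟩
            have hk'm : (k' : ℕ) < m := k'.2
            refine ⟨⟨(k' : ℕ), by omega⟩, ?_, ?_⟩
            · exact show ((k' : ℕ)) ≤ (j : ℕ) from hk'
            · show (if h : ((⟨(k' : ℕ), _⟩ : Fin (Fintype.card V)) : ℕ) < m
                  then (e' ⟨(k' : ℕ), h⟩ : V) else v) = x
              rw [dif_pos hk'm]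
              have : (⟨(k' : ℕ), hk'm⟩ : Fin m) = k' := Fin.ext rfl
              rw [this, hk'x]
          · rintro ⟨k, hk, rfl⟩
            have hkj : (k : ℕ) ≤ (j : ℕ) := hk
            have hkm : (k : ℕ) < m := by omega
            refine ⟨e' ⟨(k : ℕ), hkm⟩, ⟨⟨(k : ℕ), hkm⟩, ?_, rfl⟩, ?_⟩
            · exact show ((k : ℕ)) ≤ (j : ℕ) from hkj
            · show ((e' ⟨(k : ℕ), hkm⟩ : ↥({x : V | x ≠ v})) : V) =
                (if h : (k : ℕ) < m then (e' ⟨(k : ℕ), h⟩ : V) else v)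
              rw [dif_pos hkm]
        have htw2 := areTwins_congr hsets
          (areTwins_map (induceInduceIso G {x : V | x ≠ v} _) hu')
        refine ⟨_, areTwins_shift htw2 ?_⟩
        show ((e' ⟨(j : ℕ), hjm⟩ : ↥({x : V | x ≠ v})) : V) =
          (if h : (j : ℕ) < m then (e' ⟨(j : ℕ), h⟩ : V) else v)
        rw [dif_pos hjm]
      · have hsets : Set.univ
            = {x : V | ∃ k, k ≤ j ∧ (Equiv.ofBijective _ ⟨hfinj, hfsurj⟩) k = x} := by
          ext x
          simp only [Set.mem_univ, Set.mem_setOf_eq, true_iff]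
          refine ⟨(Equiv.ofBijective _ ⟨hfinj, hfsurj⟩).symm x, ?_, by simp⟩
          have h1 := ((Equiv.ofBijective _ ⟨hfinj, hfsurj⟩).symm x).2
          have h2' := j.2
          exact show (((Equiv.ofBijective _ ⟨hfinj, hfsurj⟩).symm x : Fin _) : ℕ) ≤ (j : ℕ)
            by omega
        have htw2 := areTwins_congr hsets (areTwins_map (induceUnivIso G).symm htw)
        refine ⟨_, areTwins_shift htw2 ?_⟩
        show v = (if h : (j : ℕ) < m then (e' ⟨(j : ℕ), h⟩ : V) else v)
        rw [dif_neg hjm]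

end Aux

theorem stmt3 {V : Type*} [Fintype V] (G : SimpleGraph V) :
    IsCograph G ↔
      ∃ e : Fin (Fintype.card V) ≃ V,
        ∀ j : Fin (Fintype.card V), 0 < (j : ℕ) →
          ∃ u : {x : V | ∃ k, k ≤ j ∧ e k = x},
            AreTwins (G.induce {x : V | ∃ k, k ≤ j ∧ e k = x}) u
              ⟨e j, ⟨j, le_refl j, rfl⟩⟩ := by
  constructor
  · intro hcog
    exact exists_ordering (Fintype.card V) G rfl hcog
  · rintro ⟨e, he⟩
    exact isCograph_of_ordering G e he
end

section
/- Let G = (V, E) be a graph, (φ_w)_{w∈V} a linearly independent family of polynomials over Z_p, q_w = Σ_{w'∈N(w)} φ_{w'}, and t ∈ Z_p. Suppose u, v are twins in G with φ_u(t) ≠ φ_v(t). Then u and v are adjacent if and only if φ_u(t) + q_u(t) = φ_v(t) + q_v(t). -/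
open SimpleGraph

theorem stmt11 {V : Type*} [Fintype V] (G : SimpleGraph V) [DecidableRel G.Adj]
    (p : ℕ) [Fact p.Prime] (φ : V → Polynomial (ZMod p))
    (hφ : LinearIndependent (ZMod p) φ) (t : ZMod p) (u v : V)
    (htwin : AreTwins G u v)
    (hne : (φ u).eval t ≠ (φ v).eval t) :
    G.Adj u v ↔
      (φ u).eval t + ∑ w' ∈ G.neighborFinset u, (φ w').eval t =
      (φ v).eval t + ∑ w' ∈ G.neighborFinset v, (φ w').eval t := by
  obtain ⟨huv, hcase⟩ := htwin
  classical
  constructor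
  · intro hadj
    rcases hcase with hopen | hclosed
    · exfalso
      have : v ∈ G.neighborSet u := hadj
      rw [hopen] at this
      exact G.irrefl this
    · have hfin : insert u (G.neighborFinset u) = insert v (G.neighborFinset v) := by
        ext w
        have := Set.ext_iff.mp hclosed w
        simp only [Set.mem_insert_iff, mem_neighborSet] at this
        simp [this]
      have h1 := Finset.sum_insert (f := fun w => (φ w).eval t)
        (G.notMem_neighborFinset_self u)
      have h2 := Finset.sum_insert (f := fun w => (φ w).eval t)
        (G.notMem_neighborFinset_self v)
      rw [← h1, ← h2, hfin]
  · intro heq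
    by_contra hadj
    have hopen : G.neighborSet u = G.neighborSet v := by
      rcases hcase with hopen | hclosed
      · exact hopen
      · exfalso
        have : u ∈ insert v (G.neighborSet v) := by
          rw [← hclosed]; exact Set.mem_insert _ _
        rcases this with h | h
        · exact huv h
        · exact hadj ((mem_neighborSet G v u).mp h).symm
    have hfin : G.neighborFinset u = G.neighborFinset v := by
      ext w
      have := Set.ext_iff.mp hopen w
      simpa using this
    rw [hfin] at heq
    exact hne (add_right_cancel heq)
end
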